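/- Let G be a finite undirected graph on vertices {0,...,n-1} whose indexing satisfies the algorithmic invariant: at each step s, the set of already-indexed neighbors of the node indexed s has lexicographic order at most that of every node indexed later (restricted to labels < s). Then for vertices u, v with I(u) < I(v), the neighbor sets restricted to indexes below any threshold s ≤ I(u) satisfy LO(N(u) ∩ [0,s)) ≤ LO(N(v) ∩ [0,s)). -/

import Mathlib

open scoped Classical

/-- The sorted sequence of a finite set of naturals, padded with the sentinel `n`. -/
def seqOf (n : ℕ) (S : Finset ℕ) (i : ℕ) : ℕ := (S.sort (· ≤ ·)).getD i n

/-- Strict lexicographic order on finite sets of naturals. -/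
def LOlt (n : ℕ) (S T : Finset ℕ) : Prop :=
  ∃ l : ℕ, (∀ i < l, seqOf n S i = seqOf n T i) ∧ seqOf n S l < seqOf n T l

/-- Non-strict lexicographic order. -/
def LOle (n : ℕ) (S T : Finset ℕ) : Prop := S = T ∨ LOlt n S T

/-- Neighbor labels of `v` restricted to labels `< s`. -/
noncomputable def Nres (n : ℕ) (G : SimpleGraph (Fin n)) (s : ℕ) (v : Fin n) : Finset ℕ :=
  ((G.neighborFinset v).filter (fun w => (w : ℕ) < s)).image (fun w => (w : ℕ))

/-- Restricting a sorted (padded) list below `s` pointwise. -/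
lemma filter_getD (s n : ℕ) (hs : s ≤ n) :
    ∀ (L : List ℕ) (i : ℕ), L.Pairwise (· ≤ ·) →
    (L.filter (fun x => decide (x < s))).getD i n = if L.getD i n < s then L.getD i n else n
  | [], i, _ => by simp [List.getD, ite_self]
  | a :: t, 0, h => by
    rcases List.pairwise_cons.1 h with ⟨ha, ht⟩
    by_cases has : a < s
    · simp [List.filter_cons, has]
    · have : (a :: t).filter (fun x => decide (x < s)) = [] := by
        rw [List.filter_eq_nil_iff]
        intro x hx
        simp only [decide_eq_true_eq]
        rcases List.mem_cons.1 hx with rfl | hx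
        · omega
        · have := ha x hx; omega
      rw [this]
      simp [List.getD, has]
  | a :: t, (i+1), h => by
    rcases List.pairwise_cons.1 h with ⟨ha, ht⟩
    by_cases has : a < s
    · have := filter_getD s n hs t i ht
      simp only [List.filter_cons, has, decide_eq_true_eq, if_true, List.getD_cons_succ]
      exact this
    · have hnil : (a :: t).filter (fun x => decide (x < s)) = [] := by
        rw [List.filter_eq_nil_iff]
        intro x hx
        simp only [decide_eq_true_eq]
        rcases List.mem_cons.1 hx with rfl | hx
        · omega
        · have := ha x hx; omega
      rw [hnil, List.getD_cons_succ]
      have htg : ¬ t.getD i n < s := by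
        rcases lt_or_ge i t.length with hi | hi
        · rw [List.getD_eq_getElem _ _ hi]
          have := ha _ (t.getElem_mem hi)
          omega
        · rw [List.getD_eq_default _ _ hi]; omega
      simp only [← List.getD_eq_getElem?_getD, if_neg htg]
      simp [List.getD]

lemma sort_filter (s : ℕ) (S : Finset ℕ) :
    (S.filter (fun x => x < s)).sort (· ≤ ·)
      = (S.sort (· ≤ ·)).filter (fun x => decide (x < s)) := by
  haveI : IsAntisymm ℕ (· ≤ ·) := ⟨fun _ _ => le_antisymm⟩
  refine (fun hp h1 h2 => List.Perm.eq_of_pairwise' (r := (· ≤ ·)) h1 h2 hp) ?_ ?_ ?_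
  · rw [← Multiset.coe_eq_coe]
    rw [Finset.sort_eq]
    rw [← Multiset.filter_coe]
    rw [Finset.sort_eq, Finset.filter_val]
  · exact Finset.pairwise_sort _ _
  · exact (Finset.pairwise_sort _ _).filter _

lemma seqOf_filter (n s : ℕ) (hs : s ≤ n) (S : Finset ℕ) (i : ℕ) :
    seqOf n (S.filter (fun x => x < s)) i =
      if seqOf n S i < s then seqOf n S i else n := by
  unfold seqOf
  rw [sort_filter]
  exact filter_getD s n hs _ i (Finset.pairwise_sort _ _)

lemma seqOf_mono (n : ℕ) (S : Finset ℕ) (hS : ∀ x ∈ S, x ≤ n) {i j : ℕ} (hij : i ≤ j) :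
    seqOf n S i ≤ seqOf n S j := by
  unfold seqOf
  set L := S.sort (· ≤ ·) with hL
  rcases lt_or_ge j L.length with hj | hj
  · have hi : i < L.length := lt_of_le_of_lt hij hj
    rw [List.getD_eq_getElem _ _ hi, List.getD_eq_getElem _ _ hj]
    rcases eq_or_lt_of_le hij with rfl | hlt
    · exact le_refl _
    · exact (Finset.pairwise_sort S (· ≤ ·)).rel_get_of_lt (by simpa using hlt)
  · rw [List.getD_eq_default _ _ hj]
    rcases lt_or_ge i L.length with hi | hi
    · rw [List.getD_eq_getElem _ _ hi]
      exact hS _ ((Finset.mem_sort (· ≤ ·)).1 (L.getElem_mem hi))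
    · rw [List.getD_eq_default _ _ hi]

lemma mem_iff_seq (n : ℕ) (S : Finset ℕ) (x : ℕ) (hx : x < n) :
    x ∈ S ↔ ∃ i, seqOf n S i = x := by
  unfold seqOf
  constructor
  · intro h
    have h' : x ∈ S.sort (· ≤ ·) := (Finset.mem_sort (· ≤ ·)).2 h
    obtain ⟨i, hi, hg⟩ := List.getElem_of_mem h'
    exact ⟨i, by rw [List.getD_eq_getElem _ _ hi, hg]⟩
  · rintro ⟨i, hi⟩
    rcases lt_or_ge i (S.sort (· ≤ ·)).length with h | h
    · rw [List.getD_eq_getElem _ _ h] at hi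
      exact (Finset.mem_sort (· ≤ ·)).1 (hi ▸ List.getElem_mem h)
    · rw [List.getD_eq_default _ _ h] at hi
      omega

lemma LOle_filter (n s : ℕ) (hs : s ≤ n) (S T : Finset ℕ)
    (hS : ∀ x ∈ S, x < n) (hT : ∀ x ∈ T, x < n) (h : LOle n S T) :
    LOle n (S.filter (fun x => x < s)) (T.filter (fun x => x < s)) := by
  rcases h with rfl | ⟨l, hpre, hl⟩
  · exact Or.inl rfl
  by_cases hls : seqOf n S l < s
  · right
    refine ⟨l, fun i hi => ?_, ?_⟩
    · rw [seqOf_filter n s hs, seqOf_filter n s hs, hpre i hi]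
    · rw [seqOf_filter n s hs, seqOf_filter n s hs, if_pos hls]
      split
      · exact hl
      · omega
  · left
    ext x
    simp only [Finset.mem_filter]
    constructor
    · rintro ⟨hxS, hxs⟩
      refine ⟨?_, hxs⟩
      obtain ⟨i, hi⟩ := (mem_iff_seq n S x (lt_of_lt_of_le hxs hs)).1 hxS
      have hil : i < l := by
        by_contra hc
        have := seqOf_mono n S (fun y hy => le_of_lt (hS y hy)) (not_lt.1 hc)
        omega
      exact (mem_iff_seq n T x (lt_of_lt_of_le hxs hs)).2 ⟨i, by rw [← hpre i hil]; exact hi⟩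
    · rintro ⟨hxT, hxs⟩
      refine ⟨?_, hxs⟩
      obtain ⟨i, hi⟩ := (mem_iff_seq n T x (lt_of_lt_of_le hxs hs)).1 hxT
      have hil : i < l := by
        by_contra hc
        have := seqOf_mono n T (fun y hy => le_of_lt (hT y hy)) (not_lt.1 hc)
        omega
      exact (mem_iff_seq n S x (lt_of_lt_of_le hxs hs)).2 ⟨i, by rw [hpre i hil]; exact hi⟩

lemma Nres_filter (n : ℕ) (G : SimpleGraph (Fin n)) (s t : ℕ) (hst : s ≤ t) (v : Fin n) :
    Nres n G s v = (Nres n G t v).filter (fun x => x < s) := by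
  unfold Nres
  rw [Finset.filter_image, Finset.filter_filter]
  congr 1
  apply Finset.filter_congr
  intro w _
  constructor
  · intro h; exact ⟨lt_of_lt_of_le h hst, h⟩
  · rintro ⟨_, h⟩; exact h

/-- If an indexing of an undirected graph satisfies the algorithmic invariant (at each
step `s` the indexed-neighbor set of the node indexed `s` is lexicographically at most
that of each node indexed later, restricted to labels `< s`), then for `I(u) < I(v)` the
neighbor sets restricted below any threshold `s ≤ I(u)` compare in the same way. -/
theorem stmt12 (n : ℕ) (G : SimpleGraph (Fin n))
    (halg : ∀ s v : Fin n, s ≤ v →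
      LOle n (Nres n G (s : ℕ) s) (Nres n G (s : ℕ) v)) :
    ∀ u v : Fin n, u < v → ∀ s : ℕ, s ≤ (u : ℕ) →
      LOle n (Nres n G s u) (Nres n G s v) := by
  intro u v huv s hsu
  have key := halg u v (le_of_lt huv)
  have hsn : s ≤ n := le_trans hsu (le_of_lt u.isLt)
  rw [Nres_filter n G s (u:ℕ) hsu u, Nres_filter n G s (u:ℕ) hsu v]
  refine LOle_filter n s hsn _ _ ?_ ?_ key
  all_goals
    intro x hx
    simp only [Nres, Finset.mem_image, Finset.mem_filter] at hx
    obtain ⟨w, hw, rfl⟩ := hx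
    have := u.isLt
    omega
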